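/- Let (S, μ) be a measure space, let ν₁ ≥ 0 and ν₂ > 0, and let u_D : S → ℝ be square-integrable with respect to μ. Define ū := max(0, u_D − ν₁/ν₂) pointwise and assume that ū is μ-integrable. Then for every u : S → ℝ with u ≥ 0 μ-almost everywhere that is both μ-integrable and square-integrable, one has ν₁ ∫_S u dμ + (ν₂/2) ∫_S (u − u_D)² dμ ≥ ν₁ ∫_S ū dμ + (ν₂/2) ∫_S (ū − u_D)² dμ. -/

import Mathlib

open Set Filter Topology MeasureTheory

lemma key_pointwise (ν₁ ν₂ a t : ℝ) (hν₁ : 0 ≤ ν₁) (hν₂ : 0 < ν₂) (ht : 0 ≤ t) :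
    ν₁ * max 0 (a - ν₁ / ν₂) + ν₂ / 2 * (max 0 (a - ν₁ / ν₂) - a) ^ 2 ≤
      ν₁ * t + ν₂ / 2 * (t - a) ^ 2 := by
  have hc : ν₂ * (ν₁ / ν₂) = ν₁ := mul_div_cancel₀ _ hν₂.ne'
  rcases le_total (a - ν₁ / ν₂) 0 with h | h
  · rw [max_eq_left h]
    have hca : ν₂ * a ≤ ν₁ := by nlinarith [mul_le_mul_of_nonneg_left h hν₂.le]
    nlinarith [sq_nonneg t, mul_nonneg ht (sub_nonneg.2 hca)]
  · rw [max_eq_right h]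
    nlinarith [sq_nonneg (t - a + ν₁ / ν₂)]

/-- The function `ū = max(0, u_D − ν₁/ν₂)` minimizes the cost
`u ↦ ν₁ ∫ u dμ + (ν₂/2) ∫ (u − u_D)² dμ` among all a.e. nonnegative functions `u`
that are integrable and square-integrable. -/
theorem projection_formula_minimizes_regularizer {S : Type*} [MeasurableSpace S]
    (μ : Measure S) (ν₁ ν₂ : ℝ) (hν₁ : 0 ≤ ν₁) (hν₂ : 0 < ν₂)
    (uD : S → ℝ) (huD : MemLp uD 2 μ)
    (hbar : Integrable (fun x => max 0 (uD x - ν₁ / ν₂)) μ) :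
    ∀ u : S → ℝ, (∀ᵐ x ∂μ, 0 ≤ u x) → Integrable u μ → MemLp u 2 μ →
      ν₁ * (∫ x, max 0 (uD x - ν₁ / ν₂) ∂μ) +
          ν₂ / 2 * (∫ x, (max 0 (uD x - ν₁ / ν₂) - uD x) ^ 2 ∂μ) ≤
        ν₁ * (∫ x, u x ∂μ) + ν₂ / 2 * (∫ x, (u x - uD x) ^ 2 ∂μ) := by
  intro u hpos hu hu2
  have hsub : MemLp (fun x => u x - uD x) 2 μ := hu2.sub huD
  have hsq : Integrable (fun x => (u x - uD x) ^ 2) μ := by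
    simpa using hsub.integrable_sq
  have hRHS : Integrable (fun x => ν₁ * u x + ν₂ / 2 * (u x - uD x) ^ 2) μ :=
    (hu.const_mul ν₁).add (hsq.const_mul (ν₂ / 2))
  by_cases hI : Integrable (fun x => (max 0 (uD x - ν₁ / ν₂) - uD x) ^ 2) μ
  · have hLHS : Integrable
        (fun x => ν₁ * max 0 (uD x - ν₁ / ν₂) +
          ν₂ / 2 * (max 0 (uD x - ν₁ / ν₂) - uD x) ^ 2) μ :=
      (hbar.const_mul ν₁).add (hI.const_mul (ν₂ / 2))
    have hmono : ∫ x, (ν₁ * max 0 (uD x - ν₁ / ν₂) +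
          ν₂ / 2 * (max 0 (uD x - ν₁ / ν₂) - uD x) ^ 2) ∂μ ≤
        ∫ x, (ν₁ * u x + ν₂ / 2 * (u x - uD x) ^ 2) ∂μ := by
      refine integral_mono_ae hLHS hRHS ?_
      filter_upwards [hpos] with x hx
      exact key_pointwise ν₁ ν₂ (uD x) (u x) hν₁ hν₂ hx
    rw [integral_add (hbar.const_mul ν₁) (hI.const_mul (ν₂ / 2)),
        integral_add (hu.const_mul ν₁) (hsq.const_mul (ν₂ / 2)),
        integral_const_mul, integral_const_mul, integral_const_mul, integral_const_mul] at hmono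
    linarith
  · rw [integral_undef hI]
    have hmono : ∫ x, ν₁ * max 0 (uD x - ν₁ / ν₂) ∂μ ≤
        ∫ x, (ν₁ * u x + ν₂ / 2 * (u x - uD x) ^ 2) ∂μ := by
      refine integral_mono_ae (hbar.const_mul ν₁) hRHS ?_
      filter_upwards [hpos] with x hx
      have := key_pointwise ν₁ ν₂ (uD x) (u x) hν₁ hν₂ hx
      nlinarith [sq_nonneg (max 0 (uD x - ν₁ / ν₂) - uD x), hν₂.le]
    rw [integral_add (hu.const_mul ν₁) (hsq.const_mul (ν₂ / 2)),
        integral_const_mul, integral_const_mul, integral_const_mul] at hmono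
    linarith
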